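/- arXiv:1905.06293 — 13 statements merged into one kernel-verified Lean document; each statement's English description precedes it below -/
import Mathlib

section
/- For every integer n ≥ 1, the path P_n on n vertices satisfies pid(P_n) = ⌈(n+1)/2⌉. -/
open scoped Classical

/-- `f : V → ℕ` is a perfect Italian dominating function of `G`:
labels are in `{0,1,2}` and every vertex labeled `0` has neighbor labels summing to exactly `2`. -/
def IsPIDFun {V : Type*} [Fintype V] (G : SimpleGraph V) (f : V → ℕ) : Prop :=
  (∀ v, f v ≤ 2) ∧ ∀ v, f v = 0 → (∑ u, if G.Adj v u then f u else 0) = 2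

/-- The perfect Italian domination number: minimum weight of a PID-function. -/
noncomputable def pid {V : Type*} [Fintype V] (G : SimpleGraph V) : ℕ :=
  sInf {w | ∃ f, IsPIDFun G f ∧ w = ∑ v, f v}

open Finset

/-- extend `f : Fin n → ℕ` to `ℕ` by zero -/
noncomputable def extF (n : ℕ) (f : Fin n → ℕ) : ℕ → ℕ := fun i => if h : i < n then f ⟨i, h⟩ else 0

lemma extF_lt (n : ℕ) (f : Fin n → ℕ) (i : ℕ) (h : i < n) : extF n f i = f ⟨i, h⟩ := dif_pos h

lemma extF_ge (n : ℕ) (f : Fin n → ℕ) (i : ℕ) (h : ¬ i < n) : extF n f i = 0 := dif_neg h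

lemma sum_extF (n : ℕ) (f : Fin n → ℕ) : ∑ i ∈ Finset.range n, extF n f i = ∑ v, f v := by
  rw [← Fin.sum_univ_eq_sum_range]
  exact Finset.sum_congr rfl fun v _ => by simp [extF, v.isLt]

lemma nbrSum (n : ℕ) (f : Fin n → ℕ) (v : Fin n) :
    (∑ u, if (SimpleGraph.pathGraph n).Adj v u then f u else 0)
    = extF n f (v.val + 1) + (if 0 < v.val then extF n f (v.val - 1) else 0) := by
  have h1 : (∑ u, if (SimpleGraph.pathGraph n).Adj v u then f u else 0)
      = ∑ i ∈ Finset.range n,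
        ((if v.val + 1 = i then extF n f i else 0) + (if i + 1 = v.val then extF n f i else 0)) := by
    rw [← Fin.sum_univ_eq_sum_range (fun i => ((if v.val + 1 = i then extF n f i else 0) + (if i + 1 = v.val then extF n f i else 0)))]
    apply Finset.sum_congr rfl
    intro u _
    rw [SimpleGraph.pathGraph_adj]
    by_cases h : v.val + 1 = u.val <;> by_cases h' : u.val + 1 = v.val <;>
      simp [h, h', extF, u.isLt] <;> omega
  rw [h1, Finset.sum_add_distrib]
  congr 1
  · rw [Finset.sum_ite_eq]
    by_cases h : v.val + 1 ∈ Finset.range n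
    · rw [if_pos h]
    · rw [if_neg h, extF_ge]
      simpa using h
  · by_cases hv : 0 < v.val
    · rw [if_pos hv]
      have h3 : ∀ i ∈ Finset.range n, (if i + 1 = v.val then extF n f i else 0)
          = (if v.val - 1 = i then extF n f i else 0) := by
        intro i _
        by_cases h : i + 1 = v.val <;> by_cases h' : v.val - 1 = i <;> simp [h, h'] <;> omega
      rw [Finset.sum_congr rfl h3, Finset.sum_ite_eq, if_pos]
      simp only [Finset.mem_range]; omega
    · rw [if_neg hv]
      apply Finset.sum_eq_zero
      intro i _
      rw [if_neg]; omega

lemma sumNbr_le (n : ℕ) (f : Fin n → ℕ) :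
    (∑ v, ∑ u, if (SimpleGraph.pathGraph n).Adj v u then f u else 0) ≤ 2 * ∑ v, f v := by
  have h1 : (∑ v, ∑ u, if (SimpleGraph.pathGraph n).Adj v u then f u else 0)
      = (∑ i ∈ Finset.range n, extF n f (i+1))
      + (∑ i ∈ Finset.range n, (if 0 < i then extF n f (i-1) else 0)) := by
    rw [← Finset.sum_add_distrib, ← Fin.sum_univ_eq_sum_range
      (fun i => extF n f (i+1) + (if 0 < i then extF n f (i-1) else 0))]
    exact Finset.sum_congr rfl fun v _ => nbrSum n f v
  rw [h1, two_mul]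
  apply Nat.add_le_add
  · -- shift right
    have h2 : (∑ i ∈ Finset.range n, extF n f (i+1)) + extF n f 0
        = ∑ i ∈ Finset.range (n+1), extF n f i := (Finset.sum_range_succ' _ n).symm
    have h3 : ∑ i ∈ Finset.range (n+1), extF n f i = (∑ i ∈ Finset.range n, extF n f i) + extF n f n :=
      Finset.sum_range_succ _ n
    rw [extF_ge n f n (lt_irrefl n)] at h3
    rw [← sum_extF]
    omega
  · have h2 : (∑ i ∈ Finset.range n, (fun i => if 0 < i then extF n f (i-1) else 0) i)
        ≤ ∑ i ∈ Finset.range (n+1), (fun i => if 0 < i then extF n f (i-1) else 0) i :=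
      Finset.sum_le_sum_of_subset (Finset.range_subset_range.2 (Nat.le_succ n))
    rw [Finset.sum_range_succ' (fun i => if 0 < i then extF n f (i-1) else 0) n] at h2
    simp only [Nat.succ_sub_one, Nat.lt_irrefl, if_neg, Nat.add_sub_cancel] at h2
    calc (∑ i ∈ Finset.range n, (if 0 < i then extF n f (i-1) else 0))
        ≤ (∑ i ∈ Finset.range n, (if 0 < i + 1 then extF n f (i + 1 - 1) else 0)) + (if (0:ℕ) < 0 then extF n f (0-1) else 0) := h2
      _ = ∑ v, f v := by
          simp only [Nat.lt_irrefl, if_neg, Nat.add_sub_cancel, if_pos (Nat.succ_pos _), add_zero]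
          exact sum_extF n f

-- number of zeros is at most the weight
lemma zeros_le (n : ℕ) (f : Fin n → ℕ) (hf : IsPIDFun (SimpleGraph.pathGraph n) f) :
    (Finset.univ.filter (fun v : Fin n => f v = 0)).card ≤ ∑ v, f v := by
  have h1 : 2 * (Finset.univ.filter (fun v : Fin n => f v = 0)).card
      = ∑ v ∈ Finset.univ.filter (fun v : Fin n => f v = 0),
          (∑ u, if (SimpleGraph.pathGraph n).Adj v u then f u else 0) := by
    rw [Finset.sum_congr rfl (fun v hv => hf.2 v (Finset.mem_filter.1 hv).2), Finset.sum_const,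
      smul_eq_mul, mul_comm]
  have h2 : ∑ v ∈ Finset.univ.filter (fun v : Fin n => f v = 0),
        (∑ u, if (SimpleGraph.pathGraph n).Adj v u then f u else 0)
      ≤ ∑ v, ∑ u, if (SimpleGraph.pathGraph n).Adj v u then f u else 0 :=
    Finset.sum_le_sum_of_subset (Finset.subset_univ _)
  have h3 := sumNbr_le n f
  omega

lemma lower_bound (n : ℕ) (hn : 1 ≤ n) (f : Fin n → ℕ)
    (hf : IsPIDFun (SimpleGraph.pathGraph n) f) : n + 1 ≤ 2 * ∑ v, f v := by
  classical
  set s := ∑ v, f v with hs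
  set Z := Finset.univ.filter (fun v : Fin n => f v = 0) with hZ
  set T := Finset.univ.filter (fun v : Fin n => f v = 2) with hT
  have hzs : Z.card ≤ s := zeros_le n f hf
  -- s + z ≥ n + T
  have hnz : (∑ v : Fin n, (if f v = 0 then 0 else 1)) + Z.card = n := by
    have := Finset.card_filter_add_card_filter_not
      (s := (Finset.univ : Finset (Fin n))) (p := fun v => ¬ f v = 0)
    simp only [Finset.card_univ, Fintype.card_fin, not_not] at this
    rw [Finset.sum_ite, Finset.sum_const, Finset.sum_const]
    simpa [Z] using this
  have hTs : (∑ v : Fin n, (if f v = 2 then 1 else 0)) = T.card := by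
    rw [Finset.sum_ite, Finset.sum_const, Finset.sum_const]; simp [T]
  have hpt : ∀ v : Fin n, (if f v = 0 then 0 else 1) + (if f v = 2 then 1 else 0) ≤ f v := by
    intro v
    have := hf.1 v
    by_cases h0 : f v = 0 <;> by_cases h2 : f v = 2 <;> simp [h0, h2] <;> omega
  have hsT : n + T.card ≤ s + Z.card := by
    have : (∑ v : Fin n, ((if f v = 0 then 0 else 1) + (if f v = 2 then 1 else 0))) ≤ s :=
      Finset.sum_le_sum fun v _ => hpt v
    rw [Finset.sum_add_distrib, hTs] at this
    omega
  by_cases hT1 : 1 ≤ T.card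
  · omega
  -- no vertex has label 2, so all labels ≤ 1
  have hle1 : ∀ v, f v ≤ 1 := by
    intro v
    have h2 : f v ≠ 2 := by
      intro h
      have hvT : v ∈ T := by simp [T, h]
      exact hT1 (Finset.card_pos.2 ⟨v, hvT⟩)
    have := hf.1 v
    omega
  have hext1 : ∀ i, extF n f i ≤ 1 := by
    intro i
    by_cases h : i < n
    · rw [extF_lt n f i h]; exact hle1 _
    · rw [extF_ge n f i h]; omega
  have key : ∀ v : Fin n, f v = 0 → 0 < v.val ∧ v.val + 1 < n ∧
      extF n f (v.val + 1) ≠ 0 := by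
    intro v hv
    have h2 := hf.2 v hv
    rw [nbrSum] at h2
    have e1 := hext1 (v.val + 1)
    have e0 := hext1 (v.val - 1)
    by_cases hv0 : 0 < v.val
    · rw [if_pos hv0] at h2
      have hlt : v.val + 1 < n := by
        by_contra h
        rw [extF_ge n f _ h] at h2
        omega
      exact ⟨hv0, hlt, by omega⟩
    · rw [if_neg hv0] at h2
      omega
  set N := Finset.univ.filter (fun v : Fin n => f v ≠ 0) with hN
  have hsN : s = N.card := by
    have : ∀ v : Fin n, f v = if f v = 0 then 0 else 1 := by
      intro v
      have := hle1 v
      by_cases h : f v = 0 <;> simp [h] <;> omega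
    rw [hs, Finset.sum_congr rfl (fun v _ => this v), Finset.sum_ite, Finset.sum_const,
      Finset.sum_const]
    simp [N]
  -- injection from insert v0 Z into N.image val
  have hinj : (insert (⟨0, hn⟩ : Fin n) Z).card ≤ (N.image Fin.val).card := by
    apply Finset.card_le_card_of_injOn (fun v => if f v = 0 then v.val + 1 else v.val)
    · intro v hv
      by_cases h : f v = 0
      · obtain ⟨_, hlt, hne⟩ := key v h
        rw [extF_lt n f _ hlt] at hne
        simp only [if_pos h]
        exact Finset.mem_image.2 ⟨⟨v.val + 1, hlt⟩, by simp [N]; exact hne, rfl⟩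
      · simp only [if_neg h]
        exact Finset.mem_image.2 ⟨v, by simp [N, h], rfl⟩
    · intro v hv w hw hvw
      simp only at hvw
      by_cases h1 : f v = 0 <;> by_cases h2 : f w = 0
      · rw [if_pos h1, if_pos h2] at hvw; exact Fin.ext (by omega)
      · rw [if_pos h1, if_neg h2] at hvw
        rcases Finset.mem_insert.1 hw with rfl | hw'
        · exact absurd hvw (by simp)
        · exact absurd (Finset.mem_filter.1 hw').2 h2
      · rw [if_neg h1, if_pos h2] at hvw
        rcases Finset.mem_insert.1 hv with rfl | hv'
        · exact absurd hvw.symm (by simp)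
        · exact absurd (Finset.mem_filter.1 hv').2 h1
      · rw [if_neg h1, if_neg h2] at hvw; exact Fin.ext hvw
  have hv0Z : (⟨0, hn⟩ : Fin n) ∉ Z := by
    simp only [Z, Finset.mem_filter]
    rintro ⟨-, h0⟩
    exact absurd (key _ h0).1 (by simp)
  rw [Finset.card_insert_of_notMem hv0Z,
    Finset.card_image_of_injective _ Fin.val_injective] at hinj
  omega

noncomputable def fUp (n : ℕ) : Fin n → ℕ := fun v => if v.val % 2 = 0 ∨ v.val = n - 1 then 1 else 0

lemma fUp_pid (n : ℕ) (hn : 1 ≤ n) : IsPIDFun (SimpleGraph.pathGraph n) (fUp n) := by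
  constructor
  · intro v; unfold fUp; split <;> omega
  · intro v hv
    have hvc : ¬ (v.val % 2 = 0 ∨ v.val = n - 1) := by
      intro h; simp [fUp, h] at hv
    push_neg at hvc
    have hv1 : 0 < v.val := by omega
    have hv2 : v.val + 1 < n := by have := v.isLt; omega
    rw [nbrSum, if_pos hv1, extF_lt n _ _ hv2, extF_lt n _ _ (by omega : v.val - 1 < n)]
    have e1 : fUp n ⟨v.val + 1, hv2⟩ = 1 := by
      simp only [fUp, if_pos]; rw [if_pos]; left; omega
    have e2 : fUp n ⟨v.val - 1, by omega⟩ = 1 := by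
      simp only [fUp]; rw [if_pos]; left; omega
    omega

lemma sum_even (m : ℕ) : ∑ i ∈ Finset.range m, (if i % 2 = 0 then 1 else 0) = (m + 1) / 2 := by
  induction m with
  | zero => simp
  | succ k ih =>
    rw [Finset.sum_range_succ, ih]
    by_cases h : k % 2 = 0 <;> simp [h] <;> omega

lemma fUp_weight (n : ℕ) (hn : 1 ≤ n) : ∑ v, fUp n v = (n + 2) / 2 := by
  have h1 : ∑ v, fUp n v = ∑ i ∈ Finset.range n, ((if i % 2 = 0 then 1 else 0)
      + (if i = n - 1 ∧ ¬ i % 2 = 0 then 1 else 0)) := by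
    rw [← Fin.sum_univ_eq_sum_range (fun i => (if i % 2 = 0 then 1 else 0)
      + (if i = n - 1 ∧ ¬ i % 2 = 0 then 1 else 0))]
    apply Finset.sum_congr rfl
    intro v _
    unfold fUp
    by_cases h : v.val % 2 = 0 <;> by_cases h' : v.val = n - 1 <;> simp [h, h'] <;>
      split_ifs <;> omega
  rw [h1, Finset.sum_add_distrib, sum_even]
  by_cases hp : (n - 1) % 2 = 0
  · have h2 : ∑ i ∈ Finset.range n, (if i = n - 1 ∧ ¬ i % 2 = 0 then 1 else 0) = 0 := by
      apply Finset.sum_eq_zero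
      intro i _
      rw [if_neg]; rintro ⟨rfl, h⟩; exact h hp
    rw [h2]; omega
  · have h3 : ∀ i ∈ Finset.range n, (if i = n - 1 ∧ ¬ i % 2 = 0 then 1 else 0)
        = (if n - 1 = i then 1 else 0) := by
      intro i _
      by_cases h : n - 1 = i
      · subst h; simp [hp]
      · rw [if_neg (fun hc => h hc.1.symm), if_neg h]
    rw [Finset.sum_congr rfl h3, Finset.sum_ite_eq,
      if_pos (Finset.mem_range.2 (by omega : n - 1 < n))]
    omega

/-- For every `n ≥ 1`, the path on `n` vertices has perfect Italian domination
number `⌈(n+1)/2⌉`. -/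
theorem pid_pathGraph (n : ℕ) (hn : 1 ≤ n) :
    pid (SimpleGraph.pathGraph n) = (n + 1 + 1) / 2 := by

  have hmem : (n + 1 + 1) / 2 ∈ {w | ∃ f, IsPIDFun (SimpleGraph.pathGraph n) f ∧ w = ∑ v, f v} :=
    ⟨fUp n, fUp_pid n hn, by rw [fUp_weight n hn]⟩
  have hub : pid (SimpleGraph.pathGraph n) ≤ (n + 1 + 1) / 2 := Nat.sInf_le hmem
  have hne : {w | ∃ f, IsPIDFun (SimpleGraph.pathGraph n) f ∧ w = ∑ v, f v}.Nonempty :=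
    ⟨_, hmem⟩
  obtain ⟨f, hf, hw⟩ := Nat.sInf_mem hne
  have hlb := lower_bound n hn f hf
  have hpid : pid (SimpleGraph.pathGraph n)
      = sInf {w | ∃ f, IsPIDFun (SimpleGraph.pathGraph n) f ∧ w = ∑ v, f v} := rfl
  have hfin : pid (SimpleGraph.pathGraph n) = ∑ v, f v := hpid.trans hw
  exact le_antisymm hub (hfin ▸ (by clear hmem hne hw hpid hfin hub hf; omega : (n + 1 + 1) / 2 ≤ ∑ v, f v))
end

section
/- For every integer n ≥ 3, the cycle C_n on n vertices satisfies pid(C_n) = ⌈n/2⌉. -/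
open scoped Classical

lemma evens_sum (N : ℕ) :
    (∑ i ∈ Finset.range N, (if i % 2 = 0 then 1 else 0)) = (N + 1) / 2 := by
  induction N with
  | zero => simp
  | succ k ih =>
    rw [Finset.sum_range_succ, ih]
    rcases Nat.mod_two_eq_zero_or_one k with h | h <;> simp [h] <;> omega

lemma arith_half (a W : ℕ) (h : a ≤ 2 * W) : (a + 1) / 2 ≤ W := by omega

lemma lower (m : ℕ) (f : Fin (m + 3) → ℕ)
    (hf : IsPIDFun (SimpleGraph.cycleGraph (m + 3)) f) :
    m + 3 ≤ 2 * ∑ v, f v := by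
  classical
  set G := SimpleGraph.cycleGraph (m + 3) with hG
  set W := ∑ v, f v with hW
  set Z : Finset (Fin (m + 3)) := Finset.univ.filter (fun v => f v = 0) with hZ
  have hcol : ∀ u, (∑ v, if G.Adj v u then f u else 0) = 2 * f u := by
    intro u
    have h1 : Finset.univ.filter (fun v => G.Adj v u) = G.neighborFinset u := by
      ext w; simp [SimpleGraph.adj_comm]
    rw [← Finset.sum_filter, h1]
    have hdeg : (G.neighborFinset u).card = 2 := SimpleGraph.cycleGraph_degree_three_le
    simp [Finset.sum_const, hdeg, mul_comm]
  have hf2 : ∀ w, f w = 0 → (∑ u, if G.Adj w u then f u else 0) = 2 := by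
    intro w hw
    have h := hf.2 w hw
    rw [← h]
    exact Finset.sum_congr rfl fun u _ =>
      @if_congr _ _ _ _ (Classical.propDecidable _) _ _ _ _ Iff.rfl rfl rfl
  have hZW : Z.card ≤ W := by
    have h2 : (∑ v ∈ Z, ∑ u, if G.Adj v u then f u else 0) = 2 * Z.card := by
      calc (∑ v ∈ Z, ∑ u, if G.Adj v u then f u else 0)
          = ∑ _v ∈ Z, 2 := Finset.sum_congr rfl (fun v hv => hf2 v ((Finset.mem_filter.mp hv).2))
        _ = 2 * Z.card := by rw [Finset.sum_const, smul_eq_mul, mul_comm]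
    have h3 : (∑ v ∈ Z, ∑ u, if G.Adj v u then f u else 0)
        ≤ ∑ v, ∑ u, if G.Adj v u then f u else 0 :=
      Finset.sum_le_sum_of_subset (Finset.subset_univ _)
    have h4 : (∑ v, ∑ u, if G.Adj v u then f u else 0) = 2 * W := by
      rw [Finset.sum_comm]
      simp only [hcol]
      rw [← Finset.mul_sum]
    omega
  have hcompl : (Finset.univ.filter (fun v => ¬ f v = 0)).card ≤ W := by
    have h5 : (Finset.univ.filter (fun v => ¬ f v = 0)).card ≤
        ∑ v ∈ Finset.univ.filter (fun v => ¬ f v = 0), f v := by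
      calc (Finset.univ.filter (fun v => ¬ f v = 0)).card
          = ∑ _v ∈ Finset.univ.filter (fun v => ¬ f v = 0), 1 := by simp
        _ ≤ ∑ v ∈ Finset.univ.filter (fun v => ¬ f v = 0), f v :=
            Finset.sum_le_sum (fun v hv => by
              have := (Finset.mem_filter.mp hv).2; omega)
    exact h5.trans (Finset.sum_le_sum_of_subset (Finset.subset_univ _))
  have h7 : Z.card + (Finset.univ.filter (fun v => ¬ f v = 0)).card
      = (Finset.univ : Finset (Fin (m + 3))).card := by
    rw [hZ, Finset.card_filter_add_card_filter_not]
  have hcard : (Finset.univ : Finset (Fin (m + 3))).card = m + 3 := by simp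
  omega

/-- For every `n ≥ 3`, the cycle on `n` vertices has perfect Italian domination
number `⌈n/2⌉`. -/
theorem pid_cycleGraph (n : ℕ) (hn : 3 ≤ n) :
    pid (SimpleGraph.cycleGraph n) = (n + 1) / 2 := by
  obtain ⟨m, rfl⟩ : ∃ m, n = m + 3 := ⟨n - 3, by omega⟩
  classical
  set G := SimpleGraph.cycleGraph (m + 3) with hG
  set f : Fin (m + 3) → ℕ := fun v => if v.val % 2 = 0 then 1 else 0 with hf
  have hsum : (∑ v, f v) = (m + 3 + 1) / 2 := by
    rw [hf, Fin.sum_univ_eq_sum_range (fun i => if i % 2 = 0 then 1 else 0) (m + 3)]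
    exact evens_sum (m + 3)
  have hPID : IsPIDFun G f := by
    constructor
    · intro v; by_cases h : v.val % 2 = 0 <;> simp [hf, h]
    · intro v hv
      have hodd : v.val % 2 = 1 := by
        rcases Nat.mod_two_eq_zero_or_one v.val with h | h
        · exfalso; simp [hf, h] at hv
        · exact h
      have hvne : v ≠ 0 := by
        intro h; subst h; simp at hodd
      have hsub : (v - 1).val = v.val - 1 := by
        rw [Fin.coe_sub_one, if_neg hvne]
      have hadd : (v + 1).val = v.val + 1 ∨ ((v + 1).val = 0 ∧ v.val = m + 2) := by
        rcases eq_or_ne v (Fin.last (m + 2)) with h | h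
        · right
          constructor
          · rw [h, Fin.last_add_one]; rfl
          · rw [h]; rfl
        · left; rw [Fin.val_add_one, if_neg h]
      have hne : v - 1 ≠ v + 1 := by
        intro h
        have hval := congrArg Fin.val h
        rw [hsub] at hval
        rcases hadd with ⟨h1⟩ | ⟨h1, h2⟩ <;> omega
      have hadjiff : ∀ w, G.Adj v w ↔ w ∈ ({v - 1, v + 1} : Finset (Fin (m + 3))) := by
        intro w
        simp only [Finset.mem_insert, Finset.mem_singleton, hG]
        rw [SimpleGraph.cycleGraph_adj, sub_eq_iff_eq_add, sub_eq_iff_eq_add,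
          eq_sub_iff_add_eq]
        constructor
        · rintro (h | h)
          · left; rw [h]; abel
          · right; rw [h]; abel
        · rintro (h | h)
          · left; rw [← h]; abel
          · right; rw [h]; abel
      have hfm : f (v - 1) = 1 := by
        simp only [hf]; rw [hsub, if_pos (by omega)]
      have hfp : f (v + 1) = 1 := by
        simp only [hf]
        rcases hadd with h | ⟨h, _⟩ <;> rw [h, if_pos (by omega)]
      refine Eq.trans (Finset.sum_congr rfl fun u _ =>
        @if_congr _ _ _ (Classical.propDecidable _) inferInstance _ _ _ _ (hadjiff u) rfl rfl) ?_
      rw [Finset.sum_ite_mem, Finset.univ_inter, Finset.sum_pair hne, hfm, hfp]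
  have hmem : ((m + 3 + 1) / 2) ∈ {w | ∃ g, IsPIDFun G g ∧ w = ∑ v, g v} :=
    ⟨f, hPID, hsum.symm⟩
  apply le_antisymm
  · exact Nat.sInf_le hmem
  · have hne : {w | ∃ g, IsPIDFun G g ∧ w = ∑ v, g v}.Nonempty := ⟨_, hmem⟩
    obtain ⟨g, hg, hw⟩ := Nat.sInf_mem hne
    have hl := lower m g hg
    show (m + 3 + 1) / 2 ≤ sInf {w | ∃ g, IsPIDFun G g ∧ w = ∑ v, g v}
    rw [hw]
    exact arith_half (m + 3) _ hl
end

section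
/- A connected finite simple graph G on at least two vertices satisfies pid(G) = 2 if and only if G is the join of graphs G₁ and G₂, where G₁ is isomorphic to K₁, to 2K₁ (two isolated vertices), or to K₂. -/
open scoped Classical

/-- A non-trivial connected graph `G` has `pid G = 2` precisely when `G` is the join
of `G₁` and `G₂` where `G₁` is `K₁`, `2K₁` or `K₂`.  Equivalently: there is a set `S`
of one or two vertices all of whose members are adjacent to every vertex outside `S`
(a one-vertex `S` gives `G₁ = K₁`; a two-vertex `S` gives `G₁ = 2K₁` or `G₁ = K₂`
according to whether its two vertices are adjacent, and `G₂` is induced on the rest). -/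
theorem pid_eq_two_iff_join {V : Type*} [Fintype V] (G : SimpleGraph V)
    (hconn : G.Connected) (hcard : 2 ≤ Fintype.card V) :
    pid G = 2 ↔
      ∃ S : Finset V, (S.card = 1 ∨ S.card = 2) ∧ ∀ u ∈ S, ∀ v, v ∉ S → G.Adj u v := by
  constructor
  · intro h
    have hne : {w | ∃ f, IsPIDFun G f ∧ w = ∑ v, f v}.Nonempty :=
      ⟨∑ v : V, (1 : ℕ), fun _ => 1, ⟨fun v => one_le_two, fun v hv => by simp at hv⟩, rfl⟩
    have hmem : (2 : ℕ) ∈ {w | ∃ f, IsPIDFun G f ∧ w = ∑ v, f v} := by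
      have h2 := Nat.sInf_mem hne
      rw [show sInf {w | ∃ f, IsPIDFun G f ∧ w = ∑ v, f v} = pid G from rfl, h] at h2
      exact h2
    obtain ⟨f, ⟨hle, hdom⟩, hsum⟩ := hmem
    set S : Finset V := Finset.univ.filter (fun v => f v ≠ 0) with hS
    have hfull : ∑ v ∈ S, f v = ∑ v, f v := Finset.sum_filter_ne_zero _
    refine ⟨S, ?_, ?_⟩
    · have hcardle : S.card ≤ 2 := by
        have h1 : S.card = ∑ _v ∈ S, 1 := Finset.card_eq_sum_ones S
        have h2 : ∑ _v ∈ S, 1 ≤ ∑ v ∈ S, f v := by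
          refine Finset.sum_le_sum fun v hv => ?_
          have : f v ≠ 0 := (Finset.mem_filter.mp hv).2
          omega
        omega
      have hcardpos : 1 ≤ S.card := by
        rcases Finset.eq_empty_or_nonempty S with he | hn
        · rw [he] at hfull
          simp at hfull
          omega
        · exact Finset.card_pos.mpr hn
      omega
    · intro u hu v hv
      have hfu : f u ≠ 0 := (Finset.mem_filter.mp hu).2
      have hfv : f v = 0 := by
        by_contra hc
        exact hv (Finset.mem_filter.mpr ⟨Finset.mem_univ v, hc⟩)
      have heq : ∑ u, (if G.Adj v u then f u else 0) = ∑ u, f u := by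
        rw [hdom v hfv, ← hsum]
      have hpt : ∀ w ∈ Finset.univ, (if G.Adj v w then f w else 0) = f w :=
        (Finset.sum_eq_sum_iff_of_le
          (fun w _ => by split <;> omega)).mp heq
      have := hpt u (Finset.mem_univ u)
      by_cases hadj : G.Adj v u
      · exact hadj.symm
      · rw [if_neg hadj] at this; omega
  · rintro ⟨S, hScard, hSadj⟩
    have hane : (if S.card = 1 then 2 else 1 : ℕ) ≠ 0 := by split <;> omega
    set a : ℕ := if S.card = 1 then 2 else 1 with ha
    set f : V → ℕ := fun v => if v ∈ S then a else 0 with hf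
    have hsumf : ∑ v, f v = 2 := by
      have : ∑ v, f v = ∑ v ∈ S, a := by
        rw [hf]
        rw [Finset.sum_ite_mem, Finset.univ_inter]
      rw [this, Finset.sum_const, smul_eq_mul]
      rcases hScard with h1 | h2
      · rw [h1, ha, if_pos h1]
      · rw [h2, ha, if_neg (by omega)]
    have hpid : IsPIDFun G f := by
      constructor
      · intro v
        rw [hf]
        dsimp only
        split
        · rw [ha]; split <;> omega
        · omega
      · intro v hv
        have hvS : v ∉ S := by
          intro hvS
          rw [hf] at hv
          simp only [if_pos hvS] at hv
          exact hane hv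
        have : ∑ u, (if G.Adj v u then f u else 0) = ∑ u, f u := by
          refine Finset.sum_congr rfl fun u _ => ?_
          by_cases huS : u ∈ S
          · rw [if_pos ((hSadj u huS v hvS).symm)]
          · have : f u = 0 := by rw [hf]; simp [huS]
            rw [this]; simp
        rw [this, hsumf]
    have hmem : (2 : ℕ) ∈ {w | ∃ f, IsPIDFun G f ∧ w = ∑ v, f v} :=
      ⟨f, hpid, hsumf.symm⟩
    have hlb : ∀ w ∈ {w | ∃ f, IsPIDFun G f ∧ w = ∑ v, f v}, 2 ≤ w := by
      rintro w ⟨g, ⟨hgle, hgdom⟩, rfl⟩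
      by_contra hlt
      push_neg at hlt
      have hsmall : ∑ v, g v ≤ 1 := by omega
      have hzero : ∃ v, g v = 0 := by
        by_contra hc
        push_neg at hc
        have : Fintype.card V ≤ ∑ v, g v := by
          rw [← Finset.card_univ, Finset.card_eq_sum_ones]
          exact Finset.sum_le_sum fun v _ => by have := hc v; omega
        omega
      obtain ⟨v, hv⟩ := hzero
      have h2 := hgdom v hv
      have hle2 : ∑ u, (if G.Adj v u then g u else 0) ≤ ∑ u, g u :=
        Finset.sum_le_sum fun u _ => by split <;> omega
      omega
    exact le_antisymm (Nat.sInf_le hmem) (le_csInf ⟨2, hmem⟩ hlb)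
end

section
/- Every connected threshold graph on at least two vertices has perfect Italian domination number equal to 2. -/
open scoped Classical

/-- `G` is a threshold graph: its vertices can be ordered `e 0, e 1, …` so that each
vertex `e j` is, at the moment of its addition, either dominating (adjacent to all
earlier vertices, when `d j = true`) or isolated (adjacent to no earlier vertex,
when `d j = false`). -/
def IsThresholdGraph {V : Type*} [Fintype V] (G : SimpleGraph V) : Prop :=
  ∃ (e : Fin (Fintype.card V) ≃ V) (d : Fin (Fintype.card V) → Bool),
    ∀ i j, i < j → (G.Adj (e i) (e j) ↔ d j = true)

lemma isolated_eq {V : Type*} {G : SimpleGraph V} {v w : V}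
    (h : ∀ x, ¬ G.Adj v x) (p : G.Walk v w) : v = w := by
  cases p with
  | nil => rfl
  | cons h' q => exact absurd h' (h _)

lemma exists_universal {V : Type*} [Fintype V] (G : SimpleGraph V)
    (hthr : IsThresholdGraph G) (hconn : G.Connected) (hcard : 2 ≤ Fintype.card V) :
    ∃ u : V, ∀ v, v ≠ u → G.Adj u v := by
  obtain ⟨e, d, hd⟩ := hthr
  have hnpos : 0 < Fintype.card V := by omega
  set last : Fin (Fintype.card V) := ⟨Fintype.card V - 1, by omega⟩ with hlast
  have hlt : ∀ j : Fin (Fintype.card V), j ≠ last → j < last := by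
    intro j hj
    have h1 : (j : ℕ) ≤ Fintype.card V - 1 := by omega
    have : (j : ℕ) < Fintype.card V - 1 := by
      rcases lt_or_eq_of_le h1 with h | h
      · exact h
      · exact absurd (Fin.ext h) hj
    exact this
  have hdlast : d last = true := by
    by_contra hdl
    have hdl' : d last = false := by simpa using hdl
    have hiso : ∀ w, ¬ G.Adj (e last) w := by
      intro w hw
      obtain ⟨j, rfl⟩ := e.surjective w
      have hj : j ≠ last := by
        rintro rfl; exact G.loopless.irrefl _ hw
      have := (hd j last (hlt j hj)).mp hw.symm
      rw [hdl'] at this; exact absurd this (by simp)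
    have hne : e last ≠ e ⟨0, hnpos⟩ := by
      intro h
      have := e.injective h
      have : Fintype.card V - 1 = (0 : ℕ) := congrArg Fin.val this
      omega
    obtain ⟨p⟩ := hconn.preconnected (e last) (e ⟨0, hnpos⟩)
    exact hne (isolated_eq hiso p)
  refine ⟨e last, ?_⟩
  intro v hv
  obtain ⟨j, rfl⟩ := e.surjective v
  have hj : j ≠ last := fun h => hv (congrArg e h)
  exact ((hd j last (hlt j hj)).mpr hdlast).symm

/-- Every connected threshold graph on at least two vertices has
perfect Italian domination number `2`. -/
theorem pid_threshold {V : Type*} [Fintype V] (G : SimpleGraph V)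
    (hthr : IsThresholdGraph G) (hconn : G.Connected) (hcard : 2 ≤ Fintype.card V) :
    pid G = 2 := by
  obtain ⟨u, hu⟩ := exists_universal G hthr hconn hcard
  set f : V → ℕ := fun v => if v = u then 2 else 0 with hf
  have hmem : (2 : ℕ) ∈ {w | ∃ f, IsPIDFun G f ∧ w = ∑ v, f v} := by
    refine ⟨f, ⟨?_, ?_⟩, ?_⟩
    · intro v; by_cases h : v = u <;> simp [hf, h]
    · intro v hv
      have hvne : v ≠ u := by
        intro h; rw [hf] at hv; simp [h] at hv
      have hadj : G.Adj v u := (hu v hvne).symm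
      have key : ∀ w, (if G.Adj v w then f w else 0) = if w = u then 2 else 0 := by
        intro w
        by_cases h : w = u
        · subst h; simp [hf, hadj]
        · simp [hf, h]
      rw [Finset.sum_congr rfl (fun w _ => key w)]
      simp
    · simp [hf]
  have hle : pid G ≤ 2 := Nat.sInf_le hmem
  have hge : 2 ≤ pid G := by
    apply le_csInf ⟨2, hmem⟩
    rintro w ⟨g, ⟨hg2, hg0⟩, rfl⟩
    by_contra hlt'
    push_neg at hlt'
    have hwle : ∑ v, g v ≤ 1 := by omega
    have hex : ∃ v, g v = 0 := by
      by_contra hall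
      push_neg at hall
      have h1 : ∀ v ∈ Finset.univ, 1 ≤ g v := fun v _ => Nat.one_le_iff_ne_zero.mpr (hall v)
      have := Finset.sum_le_sum h1
      simp at this
      omega
    obtain ⟨v, hv⟩ := hex
    have h2 := hg0 v hv
    have hle2 : (∑ w, if G.Adj v w then g w else 0) ≤ ∑ w, g w := by
      apply Finset.sum_le_sum
      intro w _
      split <;> omega
    omega
  omega
end

section
/- For every integer n ≥ 1, the complete bipartite graph K_{2,n} satisfies pid(K_{2,n}) = 2. -/
open scoped Classical

/-- For every `n ≥ 1`, the complete bipartite graph `K_{2,n}` has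
perfect Italian domination number `2`. -/
theorem pid_completeBipartite_two (n : ℕ) (hn : 1 ≤ n) :
    pid (completeBipartiteGraph (Fin 2) (Fin n)) = 2 := by
  have hmem : (2 : ℕ) ∈ {w | ∃ f, IsPIDFun (completeBipartiteGraph (Fin 2) (Fin n)) f ∧
      w = ∑ v, f v} := by
    refine ⟨Sum.elim (fun _ => 1) (fun _ => 0), ⟨?_, ?_⟩, ?_⟩
    · rintro (a | b) <;> simp
    · rintro (a | b) h
      · simp at h
      · rw [Fintype.sum_sum_type]
        simp [completeBipartiteGraph]
    · rw [Fintype.sum_sum_type]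
      simp
  refine le_antisymm (Nat.sInf_le hmem) ?_
  refine le_csInf ⟨2, hmem⟩ ?_
  rintro w ⟨f, ⟨hle, hdom⟩, rfl⟩
  by_contra hlt
  push_neg at hlt
  have hw : ∑ v, f v ≤ 1 := by omega
  -- find a vertex with label 0
  have hzero : ∃ v, f v = 0 := by
    by_contra h
    push_neg at h
    have h1 : 1 ≤ f (Sum.inl 0) := Nat.one_le_iff_ne_zero.mpr (h _)
    have h2 : 1 ≤ f (Sum.inl 1) := Nat.one_le_iff_ne_zero.mpr (h _)
    have hsub : ({Sum.inl 0, Sum.inl 1} : Finset (Fin 2 ⊕ Fin n)) ⊆ Finset.univ := by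
      simp
    have := Finset.sum_le_sum_of_subset hsub (f := f)
    rw [Finset.sum_pair (by simp : (Sum.inl 0 : Fin 2 ⊕ Fin n) ≠ Sum.inl 1)] at this
    omega
  obtain ⟨v, hv⟩ := hzero
  have h2 := hdom v hv
  have hle2 : (∑ u, if (completeBipartiteGraph (Fin 2) (Fin n)).Adj v u then f u else 0)
      ≤ ∑ u, f u := by
    apply Finset.sum_le_sum
    intro u _
    split <;> simp
  omega
end

section
/- Let G be a connected finite simple graph with pid(G) = 3. Then every PID-function f of G of weight 3 assigns the label 1 to exactly three vertices and assigns the label 2 to no vertex. -/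
open scoped Classical

/-- In a connected graph with `pid G = 3`, every PID-function of weight `3` assigns
label `1` to exactly three vertices and label `2` to no vertex. -/
theorem pid_three_structure {V : Type*} [Fintype V] (G : SimpleGraph V)
    (hconn : G.Connected) (hpid : pid G = 3) (f : V → ℕ)
    (hf : IsPIDFun G f) (hw : ∑ v, f v = 3) :
    (Finset.univ.filter fun v => f v = 1).card = 3 ∧ ∀ v, f v ≠ 2 := by
  classical
  have hno2 : ∀ v, f v ≠ 2 := by
    intro a ha
    have hsum' : ∑ v ∈ Finset.univ.erase a, f v = 1 := by
      have h := Finset.add_sum_erase Finset.univ f (Finset.mem_univ a)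
      omega
    obtain ⟨b, hbmem, hb0⟩ := Finset.exists_ne_zero_of_sum_ne_zero
      (s := Finset.univ.erase a) (by rw [hsum']; omega)
    have hba : b ≠ a := Finset.ne_of_mem_erase hbmem
    have hfb : f b = 1 := by
      have h1 : f b ≤ 1 := hsum' ▸ Finset.single_le_sum (fun i _ => Nat.zero_le _) hbmem
      omega
    have hall : ∀ c, c ≠ a → c ≠ b → f c = 0 := by
      intro c hca hcb
      have hc : c ∈ (Finset.univ.erase a).erase b := by simp [hca, hcb]
      have h2 := Finset.add_sum_erase _ f hbmem
      have h3 : f c ≤ ∑ v ∈ (Finset.univ.erase a).erase b, f v :=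
        Finset.single_le_sum (fun i _ => Nat.zero_le _) hc
      omega
    have hzero : ∀ v, f v = 0 → G.Adj v a ∧ ¬ G.Adj v b := by
      intro v hv
      have hS := hf.2 v hv
      have hsub : ∑ u, (if G.Adj v u then f u else 0)
          = ∑ u ∈ ({a, b} : Finset V), (if G.Adj v u then f u else 0) := by
        symm
        apply Finset.sum_subset (Finset.subset_univ _)
        intro u _ hu
        simp only [Finset.mem_insert, Finset.mem_singleton, not_or] at hu
        rw [hall u hu.1 hu.2]
        simp
      rw [hsub, Finset.sum_pair (Ne.symm hba), ha, hfb] at hS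
      by_cases h1 : G.Adj v a <;> by_cases h2 : G.Adj v b <;>
        simp only [h1, h2, if_true, if_false] at hS <;> first
        | exact ⟨h1, h2⟩
        | omega
    have hadj_ba : G.Adj b a := by
      obtain ⟨w⟩ := hconn.preconnected b a
      cases w with
      | nil => exact absurd rfl hba
      | cons h p =>
        rename_i u
        by_cases hu : u = a
        · rwa [hu] at h
        · have hub : u ≠ b := fun h' => G.irrefl (h' ▸ h)
          have := (hzero u (hall u hu hub)).2
          exact absurd h.symm this
    set g : V → ℕ := fun v => if v = a then 2 else 0 with hg_def
    have hg : IsPIDFun G g := by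
      constructor
      · intro v; simp only [hg_def]; split <;> omega
      · intro v hv
        have hva : v ≠ a := by
          intro h; simp [hg_def, h] at hv
        have hadj : G.Adj v a := by
          by_cases hvb : v = b
          · subst hvb; exact hadj_ba
          · exact (hzero v (hall v hva hvb)).1
        have hsub : ∑ u, (if G.Adj v u then g u else 0)
            = ∑ u ∈ ({a} : Finset V), (if G.Adj v u then g u else 0) := by
          symm
          apply Finset.sum_subset (Finset.subset_univ _)
          intro u _ hu
          simp only [Finset.mem_singleton] at hu
          simp [hg_def, hu]
        rw [hsub, Finset.sum_singleton, if_pos hadj]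
        simp [hg_def]
    have hle : pid G ≤ 2 := Nat.sInf_le ⟨g, hg, by simp [hg_def, Finset.sum_ite_eq']⟩
    omega
  refine ⟨?_, hno2⟩
  have h1 : ∀ v, f v ≤ 1 := fun v => by have := hf.1 v; have := hno2 v; omega
  calc (Finset.univ.filter fun v => f v = 1).card
      = ∑ v, if f v = 1 then 1 else 0 := by rw [Finset.card_filter]
    _ = ∑ v, f v := Finset.sum_congr rfl fun v _ => by
        rcases Nat.le_one_iff_eq_zero_or_eq_one.mp (h1 v) with h | h <;> simp [h]
    _ = 3 := hw
end

section
/- Let G be a connected finite simple graph with pid(G) > 2. Then pid(G) = 3 if and only if G has a 2-fair dominating set of cardinality 3. -/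
open scoped Classical

/-- `D` is a 2-fair dominating set of `G`: a dominating set such that every vertex
not in `D` has exactly two neighbors in `D`. -/
def IsTwoFairDomSet {V : Type*} [Fintype V] (G : SimpleGraph V) (D : Finset V) : Prop :=
  (∀ v ∉ D, ∃ u ∈ D, G.Adj v u) ∧ ∀ v ∉ D, (D.filter fun u => G.Adj v u).card = 2

-- auxiliary: case f a = 2, f b = 1 gives pid ≤ 2
lemma pid_le_two_of_21 {V : Type*} [Fintype V] (G : SimpleGraph V) (hconn : G.Connected)
    (f : V → ℕ) (hf : IsPIDFun G f) (a b : V) (hab : a ≠ b) (hfa : f a = 2) (hfb : f b = 1)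
    (hz : ∀ v, v ≠ a → v ≠ b → f v = 0) : pid G ≤ 2 := by
  have key : ∀ v, (∑ u, if G.Adj v u then f u else 0)
      = (if G.Adj v a then 2 else 0) + (if G.Adj v b then 1 else 0) := by
    intro v
    rw [← Finset.sum_subset (Finset.subset_univ ({a, b} : Finset V))
      (by intro x _ hx
          simp only [Finset.mem_insert, Finset.mem_singleton, not_or] at hx
          rw [hz x hx.1 hx.2, ite_self])]
    rw [Finset.sum_pair hab, hfa, hfb]
  -- every zero vertex is adjacent to a and not b
  have hzero : ∀ v, f v = 0 → G.Adj v a ∧ ¬ G.Adj v b := by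
    intro v hv
    have h2 := hf.2 v hv
    rw [key v] at h2
    constructor
    · by_contra h
      rw [if_neg h] at h2
      split_ifs at h2 <;> omega
    · intro h
      rw [if_pos h] at h2
      split_ifs at h2 <;> omega
  -- neighbors of b are in {a}
  have hnb : ∀ u, G.Adj b u → u = a := by
    intro u hu
    by_contra hne
    have hub : u ≠ b := fun h => G.irrefl (h ▸ hu)
    exact (hzero u (hz u hne hub)).2 hu.symm
  -- b adjacent to a
  have hba : G.Adj b a := by
    obtain ⟨w⟩ := hconn.preconnected b a
    cases w with
    | nil => exact absurd rfl hab.symm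
    | cons h _ => exact (hnb _ h) ▸ h
  set f' : V → ℕ := fun v => if v = a then 2 else 0 with hf'
  have hpidf' : IsPIDFun G f' := by
    constructor
    · intro v; simp only [hf']; split_ifs <;> omega
    · intro v hv
      have hva : v ≠ a := by
        intro h; rw [hf'] at hv; simp [h] at hv
      have hsum : (∑ u, if G.Adj v u then f' u else 0)
          = if G.Adj v a then 2 else 0 := by
        have : (∑ u, if G.Adj v u then f' u else 0)
            = ∑ u, if u = a then (if G.Adj v a then 2 else 0) else 0 := by
          refine Finset.sum_congr rfl fun u _ => ?_
          simp only [hf']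
          by_cases h : u = a
          · subst h; simp
          · simp [h]
        rw [this, Finset.sum_ite_eq' Finset.univ a (fun _ => if G.Adj v a then 2 else 0)]
        simp
      rw [hsum, if_pos]
      by_cases hvb : v = b
      · subst hvb; exact hba
      · exact (hzero v (hz v hva hvb)).1
  have hw : (∑ v, f' v) = 2 := by
    simp only [hf']
    rw [Finset.sum_ite_eq' Finset.univ a (fun _ => 2)]
    simp
  have : (2:ℕ) ∈ {w | ∃ f, IsPIDFun G f ∧ w = ∑ v, f v} := ⟨f', hpidf', hw.symm⟩
  exact Nat.sInf_le this


/-- A connected graph `G` with `pid G > 2` has `pid G = 3` if and only if `G` has a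
2-fair dominating set of size 3. -/
theorem pid_eq_three_iff_twoFairDomSet {V : Type*} [Fintype V] (G : SimpleGraph V)
    (hconn : G.Connected) (hpid : 2 < pid G) :
    pid G = 3 ↔ ∃ D : Finset V, IsTwoFairDomSet G D ∧ D.card = 3 := by
  have hne : {w | ∃ f, IsPIDFun G f ∧ w = ∑ v, f v}.Nonempty :=
    ⟨∑ v : V, 1, fun _ => 1, ⟨fun _ => one_le_two, fun v hv => by simp at hv⟩, rfl⟩
  constructor
  · intro h3
    have hmem := Nat.sInf_mem hne
    rw [show sInf {w | ∃ f, IsPIDFun G f ∧ w = ∑ v, f v} = pid G from rfl, h3] at hmem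
    obtain ⟨f, hf, hw⟩ := hmem
    set S : Finset V := Finset.univ.filter (fun v => f v ≠ 0) with hS
    have hSsum : ∑ v ∈ S, f v = 3 := by
      rw [Finset.sum_subset (Finset.subset_univ S) (by
        intro x _ hx
        simpa [hS] using hx)]
      omega
    have hlb : ∀ v ∈ S, 1 ≤ f v := by
      intro v hv
      simp only [hS, Finset.mem_filter] at hv
      omega
    have hub : ∀ v ∈ S, f v ≤ 2 := fun v _ => hf.1 v
    have hc1 : S.card • 1 ≤ ∑ v ∈ S, f v := Finset.card_nsmul_le_sum S f 1 hlb
    have hc2 : ∑ v ∈ S, f v ≤ S.card • 2 := Finset.sum_le_card_nsmul S f 2 hub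
    rw [hSsum] at hc1 hc2
    simp only [smul_eq_mul, mul_one] at hc1 hc2
    have hcases : S.card = 2 ∨ S.card = 3 := by omega
    rcases hcases with hc | hc
    · -- contradiction: pid ≤ 2
      exfalso
      obtain ⟨a, b, hab, hSab⟩ := Finset.card_eq_two.mp hc
      have hsum2 : f a + f b = 3 := by
        rw [hSab, Finset.sum_pair hab] at hSsum; exact hSsum
      have hz : ∀ v, v ≠ a → v ≠ b → f v = 0 := by
        intro v hva hvb
        by_contra hfv
        have : v ∈ S := by simp [hS, hfv]
        rw [hSab] at this
        simp only [Finset.mem_insert, Finset.mem_singleton] at this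
        tauto
      have hfa2 := hf.1 a
      have hfb2 := hf.1 b
      have : (f a = 2 ∧ f b = 1) ∨ (f a = 1 ∧ f b = 2) := by omega
      rcases this with ⟨h1, h2⟩ | ⟨h1, h2⟩
      · exact absurd (pid_le_two_of_21 G hconn f hf a b hab h1 h2 hz) (by omega)
      · exact absurd (pid_le_two_of_21 G hconn f hf b a hab.symm h2 h1
          (fun v h1' h2' => hz v h2' h1')) (by omega)
    · -- the support is a 2-fair dominating set of size 3
      have fone : ∀ v ∈ S, f v = 1 := by
        intro v hv
        have herase : f v + ∑ u ∈ S.erase v, f u = ∑ u ∈ S, f u :=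
          Finset.add_sum_erase S f hv
        have hce : (S.erase v).card = 2 := by
          rw [Finset.card_erase_of_mem hv, hc]
        have : (S.erase v).card • 1 ≤ ∑ u ∈ S.erase v, f u :=
          Finset.card_nsmul_le_sum _ f 1 (fun u hu => hlb u (Finset.mem_of_mem_erase hu))
        rw [hce] at this
        simp only [smul_eq_mul, mul_one] at this
        have := hlb v hv
        omega
      refine ⟨S, ⟨?_, ?_⟩, hc⟩
      · intro v hv
        have hfv : f v = 0 := by
          by_contra hfv
          exact hv (by simp [hS, hfv])
        have h2 := hf.2 v hfv
        have hsub : (∑ u, if G.Adj v u then f u else 0)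
            = ∑ u ∈ S, if G.Adj v u then f u else 0 :=
          (Finset.sum_subset (Finset.subset_univ S) (by
            intro x _ hx
            have : f x = 0 := by simpa [hS] using hx
            rw [this, ite_self])).symm
        rw [hsub] at h2
        have h3' : ∑ u ∈ S, (if G.Adj v u then (1:ℕ) else 0) = 2 := by
          rw [← h2]
          exact Finset.sum_congr rfl (fun u hu => by rw [fone u hu])
        rw [← Finset.card_filter] at h3'
        have : (S.filter fun u => G.Adj v u).Nonempty := by
          rw [← Finset.card_pos, h3']; omega
        obtain ⟨u, hu⟩ := this
        rw [Finset.mem_filter] at hu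
        exact ⟨u, hu.1, hu.2⟩
      · intro v hv
        have hfv : f v = 0 := by
          by_contra hfv
          exact hv (by simp [hS, hfv])
        have h2 := hf.2 v hfv
        have hsub : (∑ u, if G.Adj v u then f u else 0)
            = ∑ u ∈ S, if G.Adj v u then f u else 0 :=
          (Finset.sum_subset (Finset.subset_univ S) (by
            intro x _ hx
            have : f x = 0 := by simpa [hS] using hx
            rw [this, ite_self])).symm
        rw [hsub] at h2
        have h3' : ∑ u ∈ S, (if G.Adj v u then (1:ℕ) else 0) = 2 := by
          rw [← h2]
          exact Finset.sum_congr rfl (fun u hu => by rw [fone u hu])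
        rw [← Finset.card_filter] at h3'
        exact h3'
  · rintro ⟨D, ⟨hdom, hfair⟩, hcard⟩
    set f : V → ℕ := fun v => if v ∈ D then 1 else 0 with hf
    have hpidf : IsPIDFun G f := by
      constructor
      · intro v; simp only [hf]; split_ifs <;> omega
      · intro v hv
        have hvD : v ∉ D := by
          intro h; simp [hf, h] at hv
        have : (∑ u, if G.Adj v u then f u else 0)
            = ∑ u, if u ∈ D ∧ G.Adj v u then 1 else 0 := by
          refine Finset.sum_congr rfl fun u _ => ?_
          simp only [hf]
          split_ifs <;> tauto
        rw [this]
        rw [← Finset.card_filter]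
        rw [← hfair v hvD]
        congr 1
        ext u
        simp [and_comm]
    have hwf : (∑ v, f v) = 3 := by
      simp only [hf]
      rw [Finset.sum_ite_mem, Finset.univ_inter, Finset.sum_const, smul_eq_mul, mul_one, hcard]
    have hle : pid G ≤ 3 :=
      Nat.sInf_le (show (3:ℕ) ∈ {w | ∃ f, IsPIDFun G f ∧ w = ∑ v, f v} from ⟨f, hpidf, hwf.symm⟩)
    omega
end

section
/- For all integers n₁, n₂ ≥ 3, the complete bipartite graph K_{n₁,n₂} satisfies pid(K_{n₁,n₂}) = 4. -/
open scoped Classical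

section Aux

variable {n₁ n₂ : ℕ}

lemma nbr_sum_inl (f : Fin n₁ ⊕ Fin n₂ → ℕ) (a : Fin n₁) :
    (∑ u, if (completeBipartiteGraph (Fin n₁) (Fin n₂)).Adj (Sum.inl a) u then f u else 0)
      = ∑ b, f (Sum.inr b) := by
  rw [Fintype.sum_sum_type]
  simp

lemma nbr_sum_inr (f : Fin n₁ ⊕ Fin n₂ → ℕ) (b : Fin n₂) :
    (∑ u, if (completeBipartiteGraph (Fin n₁) (Fin n₂)).Adj (Sum.inr b) u then f u else 0)
      = ∑ a, f (Sum.inl a) := by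
  rw [Fintype.sum_sum_type]
  simp

lemma exists_zero {α : Type*} [Fintype α] (f : α → ℕ)
    (hsum : ∑ a, f a < Fintype.card α) : ∃ a, f a = 0 := by
  by_contra h
  push_neg at h
  have : Fintype.card α • 1 ≤ ∑ a, f a := by
    rw [← Finset.card_univ]
    exact Finset.card_nsmul_le_sum _ _ _ (fun a _ => Nat.one_le_iff_ne_zero.2 (h a))
  simp at this
  omega

lemma lower_s12 (f : Fin n₁ ⊕ Fin n₂ → ℕ) (h₁ : 3 ≤ n₁) (h₂ : 3 ≤ n₂)
    (hf : IsPIDFun (completeBipartiteGraph (Fin n₁) (Fin n₂)) f) :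
    4 ≤ ∑ v, f v := by
  obtain ⟨hle, hzero⟩ := hf
  set A := ∑ a, f (Sum.inl a) with hA
  set B := ∑ b, f (Sum.inr b) with hB
  have hL : ∀ a : Fin n₁, f (Sum.inl a) = 0 → B = 2 := fun a ha => by
    have := hzero _ ha; rwa [nbr_sum_inl] at this
  have hR : ∀ b : Fin n₂, f (Sum.inr b) = 0 → A = 2 := fun b hb => by
    have := hzero _ hb; rwa [nbr_sum_inr] at this
  rw [Fintype.sum_sum_type, ← hA, ← hB]
  by_contra h
  push_neg at h
  -- one of A, B is ≤ 1
  rcases le_or_gt A 1 with hA1 | hA1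
  · obtain ⟨a, ha⟩ := exists_zero (fun a : Fin n₁ => f (Sum.inl a)) (by simpa using by omega)
    have hB2 := hL a ha
    obtain ⟨b, hb⟩ := exists_zero (fun b : Fin n₂ => f (Sum.inr b)) (by simpa using by omega)
    exact absurd (hR b hb) (by omega)
  · have hB1 : B ≤ 1 := by omega
    obtain ⟨b, hb⟩ := exists_zero (fun b : Fin n₂ => f (Sum.inr b)) (by simpa using by omega)
    have hA2 := hR b hb
    obtain ⟨a, ha⟩ := exists_zero (fun a : Fin n₁ => f (Sum.inl a)) (by simpa using by omega)
    exact absurd (hL a ha) (by omega)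

end Aux

/-- For all `n₁, n₂ ≥ 3`, the complete bipartite graph `K_{n₁,n₂}` has
perfect Italian domination number `4`. -/
theorem pid_completeBipartite (n₁ n₂ : ℕ) (h₁ : 3 ≤ n₁) (h₂ : 3 ≤ n₂) :
    pid (completeBipartiteGraph (Fin n₁) (Fin n₂)) = 4 := by
  have hn1 : 0 < n₁ := by omega
  have hn2 : 0 < n₂ := by omega
  set i0 : Fin n₁ := ⟨0, hn1⟩
  set j0 : Fin n₂ := ⟨0, hn2⟩
  set f : Fin n₁ ⊕ Fin n₂ → ℕ := fun v =>
    if v = Sum.inl i0 ∨ v = Sum.inr j0 then 2 else 0 with hfdef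
  have hfA : ∑ a, f (Sum.inl a) = 2 := by
    simp only [hfdef]
    rw [Finset.sum_congr rfl (fun a _ => by simp : ∀ a ∈ Finset.univ,
      (if Sum.inl a = Sum.inl i0 ∨ (Sum.inl a : Fin n₁ ⊕ Fin n₂) = Sum.inr j0 then 2 else 0)
        = if a = i0 then 2 else 0)]
    simp
  have hfB : ∑ b, f (Sum.inr b) = 2 := by
    simp only [hfdef]
    rw [Finset.sum_congr rfl (fun b _ => by simp : ∀ b ∈ Finset.univ,
      (if (Sum.inr b : Fin n₁ ⊕ Fin n₂) = Sum.inl i0 ∨ Sum.inr b = Sum.inr j0 then 2 else 0)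
        = if b = j0 then 2 else 0)]
    simp
  have hfPID : IsPIDFun (completeBipartiteGraph (Fin n₁) (Fin n₂)) f := by
    constructor
    · intro v; simp only [hfdef]; split <;> omega
    · rintro (a | b) hv
      · rw [nbr_sum_inl]; exact hfB
      · rw [nbr_sum_inr]; exact hfA
  have hmem : (4 : ℕ) ∈ {w | ∃ g, IsPIDFun (completeBipartiteGraph (Fin n₁) (Fin n₂)) g
      ∧ w = ∑ v, g v} := by
    refine ⟨f, hfPID, ?_⟩
    rw [Fintype.sum_sum_type, hfA, hfB]
  refine le_antisymm (Nat.sInf_le hmem) (le_csInf ⟨4, hmem⟩ ?_)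
  rintro w ⟨g, hg, rfl⟩
  exact lower_s12 g h₁ h₂ hg
end

section
/- For all integers n₁, n₂, n₃ ≥ 3, the complete tripartite graph K_{n₁,n₂,n₃} satisfies pid(K_{n₁,n₂,n₃}) = 3. -/
open scoped Classical

/-- For all `n₁, n₂, n₃ ≥ 3`, the complete tripartite graph `K_{n₁,n₂,n₃}` has
perfect Italian domination number `3`. -/
theorem pid_completeTripartite (n : Fin 3 → ℕ) (h : ∀ i, 3 ≤ n i) :
    pid (SimpleGraph.completeMultipartiteGraph fun i => Fin (n i)) = 3 := by
  have hadj : ∀ v u : Σ i, Fin (n i),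
      (SimpleGraph.completeMultipartiteGraph fun i => Fin (n i)).Adj v u = (v.1 ≠ u.1) := by
    intro v u
    simp [SimpleGraph.completeMultipartiteGraph]
  have hsig : ∀ g : (Σ i, Fin (n i)) → ℕ,
      ∑ u : Σ i, Fin (n i), g u = ∑ j, ∑ x : Fin (n j), g ⟨j, x⟩ := fun g => by
    rw [← Finset.univ_sigma_univ, Finset.sum_sigma]
  have hone : ∀ i, (∑ x : Fin (n i), if (x : ℕ) = 0 then 1 else 0) = 1 := by
    intro i
    have hpos : 0 < n i := lt_of_lt_of_le (by norm_num) (h i)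
    have heq : ∀ x : Fin (n i), ((x : ℕ) = 0) = (x = ⟨0, hpos⟩) := by
      intro x; simp [Fin.ext_iff]
    simp only [heq]
    rw [Finset.sum_ite_eq' Finset.univ (⟨0, hpos⟩ : Fin (n i)) (fun _ => 1)]
    simp
  -- membership : weight 3 is achievable
  have hmem : (3 : ℕ) ∈ {w | ∃ f, IsPIDFun (SimpleGraph.completeMultipartiteGraph
      fun i => Fin (n i)) f ∧ w = ∑ v, f v} := by
    refine ⟨fun v => if (v.2 : ℕ) = 0 then 1 else 0, ⟨?_, ?_⟩, ?_⟩
    · intro v; dsimp only; split <;> omega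
    · intro v hv
      obtain ⟨i, x⟩ := v
      simp only [hadj]
      have hconv : (∑ u : Σ j, Fin (n j), if i ≠ u.1
          then (if ((u.2 : ℕ) = 0) then 1 else 0) else 0) = ∑ j, if i ≠ j then 1 else 0 := by
        rw [hsig (fun u => if i ≠ u.1 then (if ((u.2 : ℕ) = 0) then 1 else 0) else 0)]
        apply Finset.sum_congr rfl
        intro j _
        by_cases hij : i = j
        · simp [hij]
        · simp [hij, hone j]
      rw [hconv]
      fin_cases i <;> simp [Fin.sum_univ_three]
    · show (3 : ℕ) = ∑ v : Σ j, Fin (n j), if ((v.2 : ℕ) = 0) then 1 else 0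
      rw [hsig (fun v => if ((v.2 : ℕ) = 0) then 1 else 0)]
      have : ∀ j : Fin 3, (∑ x : Fin (n j),
          if (((⟨j, x⟩ : Σ i, Fin (n i)).2 : ℕ) = 0) then 1 else 0) = 1 := fun j => hone j
      rw [Fin.sum_univ_three, this, this, this]
  -- lower bound
  have hlb : ∀ w ∈ {w | ∃ f, IsPIDFun (SimpleGraph.completeMultipartiteGraph
      fun i => Fin (n i)) f ∧ w = ∑ v, f v}, 3 ≤ w := by
    rintro w ⟨f, ⟨hf2, hf0⟩, rfl⟩
    by_contra hcon
    push_neg at hcon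
    have hw : ∑ v, f v ≤ 2 := by omega
    set S : Fin 3 → ℕ := fun i => ∑ x : Fin (n i), f ⟨i, x⟩ with hS
    have hsum : S 0 + S 1 + S 2 = ∑ v, f v := by
      rw [hsig f, Fin.sum_univ_three]
    have key : ∀ i : Fin 3, S i + 2 = ∑ v, f v := by
      intro i
      have hzero : ∃ x : Fin (n i), f ⟨i, x⟩ = 0 := by
        by_contra hz
        push_neg at hz
        have h1 : n i ≤ S i := by
          calc n i = ∑ _x : Fin (n i), 1 := by simp
            _ ≤ S i := Finset.sum_le_sum fun x _ => Nat.one_le_iff_ne_zero.2 (hz x)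
        have h2 : S i ≤ ∑ v, f v := by
          rw [hsig f]
          exact Finset.single_le_sum (f := fun j => ∑ x : Fin (n j), f ⟨j, x⟩)
            (fun j _ => Nat.zero_le _) (Finset.mem_univ i)
        have := h i
        omega
      obtain ⟨x, hx⟩ := hzero
      have h2 := hf0 ⟨i, x⟩ hx
      simp only [hadj] at h2
      have hSi : S i = ∑ u : Σ j, Fin (n j), if u.1 = i then f u else 0 := by
        rw [hsig (fun u => if u.1 = i then f u else 0)]
        have hst : ∀ j : Fin 3, (∑ y : Fin (n j),
            if (⟨j, y⟩ : Σ k, Fin (n k)).1 = i then f ⟨j, y⟩ else 0)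
            = if j = i then S j else 0 := by
          intro j
          by_cases hij : j = i
          · subst hij; simp [hS]
          · simp [hij]
        simp only [hst]
        rw [Finset.sum_ite_eq' Finset.univ i (fun j => S j)]
        simp
      have hnbr : (∑ u : Σ j, Fin (n j), if i ≠ u.1
          then f u else 0) + S i = ∑ v, f v := by
        rw [hSi, ← Finset.sum_add_distrib]
        apply Finset.sum_congr rfl
        intro u _
        by_cases hu : u.1 = i
        · simp [hu]
        · have hu' : i ≠ u.1 := fun h' => hu h'.symm
          simp [hu, hu']
      omega
    have k0 := key 0
    have k1 := key 1
    have k2 := key 2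
    omega
  exact le_antisymm (Nat.sInf_le hmem) (le_csInf ⟨3, hmem⟩ hlb)
end

section
/- Let k > 3 be an integer and let n₁, n₂, …, n_k be integers with each n_i ≥ 3. Then the complete k-partite graph K_{n₁,n₂,…,n_k} satisfies pid(K_{n₁,n₂,…,n_k}) = n₁ + n₂ + ⋯ + n_k, i.e., its perfect Italian domination number equals its order. -/
open scoped Classical

lemma sigma_sum_split {k : ℕ} (n : Fin k → ℕ) (f : (Σ i, Fin (n i)) → ℕ) :
    ∑ v, f v = ∑ i, ∑ a : Fin (n i), f ⟨i, a⟩ := by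
  rw [show (Finset.univ : Finset (Σ i, Fin (n i))) = Finset.univ.sigma (fun _ => Finset.univ)
    from rfl, Finset.sum_sigma]

/-- For `k > 3` parts each of size at least `3`, the complete `k`-partite graph
`K_{n₁,…,n_k}` has perfect Italian domination number equal to its order. -/
theorem pid_completeMultipartite (k : ℕ) (hk : 3 < k) (n : Fin k → ℕ) (h : ∀ i, 3 ≤ n i) :
    pid (SimpleGraph.completeMultipartiteGraph fun i => Fin (n i)) = ∑ i, n i := by
  set G := SimpleGraph.completeMultipartiteGraph fun i => Fin (n i) with hG
  have hcard : ∑ v : (Σ i, Fin (n i)), (1 : ℕ) = ∑ i, n i := by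
    rw [sigma_sum_split]; simp
  have hmem : (∑ i, n i) ∈ {w | ∃ f, IsPIDFun G f ∧ w = ∑ v, f v} := by
    refine ⟨fun _ => 1, ⟨fun v => one_le_two, fun v hv => absurd hv one_ne_zero⟩, hcard.symm⟩
  have hlow : ∀ w ∈ {w | ∃ f, IsPIDFun G f ∧ w = ∑ v, f v}, (∑ i, n i) ≤ w := by
    rintro w ⟨f, hf, rfl⟩
    set S : Fin k → ℕ := fun i => ∑ a : Fin (n i), f ⟨i, a⟩ with hS
    have nbr : ∀ w : (Σ i, Fin (n i)),
        (∑ u, @ite ℕ (G.Adj w u) (Classical.propDecidable _) (f u) 0)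
          = ∑ j ∈ Finset.univ.erase w.1, S j := by
      intro w
      rw [show (Finset.univ : Finset (Σ i, Fin (n i))) = Finset.univ.sigma
        (fun _ => Finset.univ) from rfl, Finset.sum_sigma]
      have step1 : ∀ j ∈ (Finset.univ : Finset (Fin k)),
          (∑ a : Fin (n j), @ite ℕ (G.Adj w ⟨j, a⟩) (Classical.propDecidable _) (f ⟨j, a⟩) 0)
            = @ite ℕ (w.1 ≠ j) (Classical.propDecidable _) (S j) 0 := by
        intro j _
        by_cases hj : w.1 ≠ j
        · rw [if_pos hj]
          refine Finset.sum_congr rfl fun a _ => ?_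
          rw [if_pos]
          exact hj
        · rw [if_neg hj]
          refine Finset.sum_eq_zero fun a _ => ?_
          rw [if_neg]
          exact hj
      rw [Finset.sum_congr rfl step1,
        ← Finset.sum_erase_add Finset.univ _ (Finset.mem_univ w.1),
        if_neg (fun hh => hh rfl), add_zero]
      exact Finset.sum_congr rfl fun j hj => if_pos (Finset.ne_of_mem_erase hj).symm
    -- fact F: any zero vertex gives total = S of its part + 2
    have F : ∀ v : (Σ i, Fin (n i)), f v = 0 → (∑ i, S i) = S v.1 + 2 := by
      intro v hv
      have h2 := hf.2 v hv
      rw [nbr v] at h2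
      rw [← Finset.sum_erase_add _ _ (Finset.mem_univ v.1), h2]
      exact Nat.add_comm _ _
    by_contra hlt
    push_neg at hlt
    -- there is a zero vertex
    obtain ⟨v, hv0⟩ : ∃ v, f v = 0 := by
      by_contra hc
      push_neg at hc
      have : ∑ v : (Σ i, Fin (n i)), (1 : ℕ) ≤ ∑ v, f v :=
        Finset.sum_le_sum (fun v _ => Nat.one_le_iff_ne_zero.mpr (hc v))
      omega
    -- some other part has zero sum
    obtain ⟨j, hjv, hj0⟩ : ∃ j, j ≠ v.1 ∧ S j = 0 := by
      by_contra hc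
      push_neg at hc
      have h2 := hf.2 v hv0
      rw [nbr v] at h2
      have hcard2 : (Finset.univ.erase v.1).card = k - 1 := by
        rw [Finset.card_erase_of_mem (Finset.mem_univ _), Finset.card_univ, Fintype.card_fin]
      have : (Finset.univ.erase v.1).card ≤ ∑ j ∈ Finset.univ.erase v.1, S j := by
        calc (Finset.univ.erase v.1).card
            = ∑ _j ∈ Finset.univ.erase v.1, 1 := by simp
          _ ≤ ∑ j ∈ Finset.univ.erase v.1, S j :=
              Finset.sum_le_sum (fun j hj => Nat.one_le_iff_ne_zero.mpr
                (hc j (Finset.ne_of_mem_erase hj)))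
      omega
    -- part j has a vertex, labeled 0
    have hb0 : f ⟨j, ⟨0, by have := h j; omega⟩⟩ = 0 := by
      have := Finset.sum_eq_zero_iff.mp hj0 ⟨0, by have := h j; omega⟩ (Finset.mem_univ _)
      exact this
    have hW2 : (∑ i, S i) = 2 := by
      have := F ⟨j, ⟨0, by have := h j; omega⟩⟩ hb0
      simpa [hj0] using this
    -- every part has zero sum
    have hall : ∀ l, S l = 0 := by
      intro l
      have hSle : S l ≤ 2 := by
        rw [← hW2]
        exact Finset.single_le_sum (fun i _ => Nat.zero_le _) (Finset.mem_univ l)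
      obtain ⟨a, ha0⟩ : ∃ a : Fin (n l), f ⟨l, a⟩ = 0 := by
        by_contra hc
        push_neg at hc
        have h3 : ∑ a : Fin (n l), (1 : ℕ) ≤ S l :=
          Finset.sum_le_sum (fun a _ => Nat.one_le_iff_ne_zero.mpr (hc a))
        simp at h3
        have := h l
        omega
      have h4 : ∑ i, S i = S l + 2 := F ⟨l, a⟩ ha0
      omega
    have : (∑ i, S i) = 0 := Finset.sum_eq_zero (fun l _ => hall l)
    omega
  exact le_antisymm (Nat.sInf_le hmem) (le_csInf ⟨_, hmem⟩ hlow)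
end

section
/- Every cubic (3-regular) finite simple graph G on n vertices satisfies pid(G) ≤ n − 2·im(G), where im(G) is the strong matching number of G. -/
open scoped Classical

/-- `M` is a strong (induced) matching of `G`: a set of edges of `G` such that no two
distinct edges of `M` share an endpoint or have endpoints joined by an edge of `G`. -/
def IsStrongMatching {V : Type*} [Fintype V] (G : SimpleGraph V) (M : Finset (Sym2 V)) : Prop :=
  (↑M ⊆ G.edgeSet) ∧
    ∀ e ∈ M, ∀ e' ∈ M, e ≠ e' → ∀ u ∈ e, ∀ v ∈ e', u ≠ v ∧ ¬ G.Adj u v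

/-- The strong matching number `im G`: maximum size of a strong matching of `G`. -/
noncomputable def strongMatchingNumber {V : Type*} [Fintype V] (G : SimpleGraph V) : ℕ :=
  sSup {n | ∃ M : Finset (Sym2 V), IsStrongMatching G M ∧ M.card = n}

/-- Every cubic graph `G` on `n` vertices satisfies `pid G ≤ n - 2 * im G`. -/
theorem pid_le_card_sub_two_mul_strongMatchingNumber {V : Type*} [Fintype V]
    (G : SimpleGraph V) (hcubic : ∀ v, G.degree v = 3) :
    pid G ≤ Fintype.card V - 2 * strongMatchingNumber G := by
  classical
  -- the set of achievable strong matching sizes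
  have hne : Set.Nonempty {n | ∃ M : Finset (Sym2 V), IsStrongMatching G M ∧ M.card = n} :=
    ⟨0, ∅, ⟨by simp, by simp⟩, by simp⟩
  have hbdd : BddAbove {n | ∃ M : Finset (Sym2 V), IsStrongMatching G M ∧ M.card = n} := by
    refine ⟨Fintype.card (Sym2 V), ?_⟩
    rintro n ⟨M, _, rfl⟩
    exact Finset.card_le_univ M
  have hmem : strongMatchingNumber G ∈
      {n | ∃ M : Finset (Sym2 V), IsStrongMatching G M ∧ M.card = n} :=
    Nat.sSup_mem hne hbdd
  obtain ⟨M, hM, hcard⟩ := hmem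
  -- vertices covered by the matching
  set toFin : Sym2 V → Finset V := fun e => Finset.univ.filter (fun v => v ∈ e) with htoFin
  set S : Finset V := M.biUnion toFin with hS
  have hmemS : ∀ v, v ∈ S ↔ ∃ e ∈ M, v ∈ e := by
    intro v
    simp [hS, htoFin, Finset.mem_biUnion]
  have htwo : ∀ e ∈ M, (toFin e).card = 2 := by
    intro e he
    have hedge : e ∈ G.edgeSet := hM.1 he
    induction e using Sym2.ind with
    | _ a b =>
      rw [SimpleGraph.mem_edgeSet] at hedge
      have hab : a ≠ b := hedge.ne
      have : toFin s(a, b) = {a, b} := by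
        ext x
        simp [htoFin, Sym2.mem_iff]
      rw [this, Finset.card_pair hab]
  have hdisj : ∀ e ∈ M, ∀ e' ∈ M, e ≠ e' → Disjoint (toFin e) (toFin e') := by
    intro e he e' he' hne'
    rw [Finset.disjoint_left]
    intro x hx hx'
    simp only [htoFin, Finset.mem_filter] at hx hx'
    exact (hM.2 e he e' he' hne' x hx.2 x hx'.2).1 rfl
  have hScard : S.card = 2 * M.card := by
    rw [hS, Finset.card_biUnion hdisj]
    rw [Finset.sum_congr rfl htwo, Finset.sum_const, smul_eq_mul, mul_comm]
  -- the PID function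
  set f : V → ℕ := fun v => if v ∈ S then 0 else 1 with hf
  have hf1 : ∀ v, f v ≤ 2 := by
    intro v; simp only [hf]; split <;> omega
  have hpid : IsPIDFun G f := by
    refine ⟨hf1, ?_⟩
    intro v hv
    have hvS : v ∈ S := by
      by_contra h
      simp [hf, h] at hv
    obtain ⟨e, heM, hve⟩ := (hmemS v).1 hvS
    have hedge : e ∈ G.edgeSet := hM.1 heM
    set w := Sym2.Mem.other hve with hw
    have hvw : s(v, w) = e := Sym2.other_spec hve
    have hadj : G.Adj v w := by
      rw [← hvw] at hedge
      exact hedge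
    have hwe : w ∈ e := by rw [← hvw]; simp
    have hfw : f w = 0 := by
      have : w ∈ S := (hmemS w).2 ⟨e, heM, hwe⟩
      simp [hf, this]
    have hfu : ∀ u, G.Adj v u → u ≠ w → f u = 1 := by
      intro u hu huw
      have : u ∉ S := by
        intro huS
        obtain ⟨e', he'M, hue'⟩ := (hmemS u).1 huS
        by_cases hee' : e' = e
        · subst hee'
          rw [← hvw, Sym2.mem_iff] at hue'
          rcases hue' with h | h
          · exact G.irrefl (h ▸ hu)
          · exact huw h
        · exact (hM.2 e heM e' he'M (Ne.symm hee') v hve u hue').2 hu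
      simp [hf, this]
    -- compute the sum over neighbors
    have hfilter : ∑ u, (if G.Adj v u then f u else 0)
        = ∑ u ∈ G.neighborFinset v, f u := by
      rw [SimpleGraph.neighborFinset_eq_filter, Finset.sum_filter]
    have hwN : w ∈ G.neighborFinset v := by
      rw [SimpleGraph.mem_neighborFinset]; exact hadj
    have hsum : ∑ u ∈ G.neighborFinset v, f u
        = f w + ∑ u ∈ (G.neighborFinset v).erase w, f u :=
      (Finset.add_sum_erase _ f hwN).symm
    have herase : ∑ u ∈ (G.neighborFinset v).erase w, f u
        = ((G.neighborFinset v).erase w).card := by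
      rw [Finset.card_eq_sum_ones]
      refine Finset.sum_congr rfl ?_
      intro u hu
      have hu' := Finset.mem_of_mem_erase hu
      rw [SimpleGraph.mem_neighborFinset] at hu'
      exact hfu u hu' (Finset.ne_of_mem_erase hu)
    have hcard3 : (G.neighborFinset v).card = 3 := by
      rw [SimpleGraph.card_neighborFinset_eq_degree]; exact hcubic v
    rw [hfilter, hsum, hfw, herase, Finset.card_erase_of_mem hwN, hcard3]
  -- weight computation
  have hweight : ∑ v, f v = Fintype.card V - 2 * strongMatchingNumber G := by
    have h1 : ∑ v, f v = (Finset.univ.filter (fun v => v ∉ S)).card := by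
      rw [Finset.card_eq_sum_ones, Finset.sum_filter]
      refine Finset.sum_congr rfl ?_
      intro v _
      by_cases h : v ∈ S <;> simp [hf, h]
    have h2 : Finset.univ.filter (fun v => v ∉ S) = Finset.univ \ S := by
      ext v; simp
    rw [h1, h2, Finset.card_sdiff_of_subset (Finset.subset_univ S), Finset.card_univ, hScard, hcard]
  exact Nat.sInf_le ⟨f, hpid, hweight.symm ▸ rfl⟩
end

section
/- Every connected finite simple graph G on n vertices with maximum degree Δ satisfies pid(G) ≥ 2n/(Δ + 2). -/
open scoped Classical

/-- Every connected graph `G` on `n` vertices with maximum degree `Δ` satisfies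
`pid G ≥ 2n / (Δ + 2)`. -/
theorem pid_ge_two_card_div_maxDegree_add_two {V : Type*} [Fintype V]
    (G : SimpleGraph V) (hconn : G.Connected) :
    2 * (Fintype.card V : ℝ) / ((G.maxDegree : ℝ) + 2) ≤ (pid G : ℝ) := by
  classical
  have hne : {w | ∃ f, IsPIDFun G f ∧ w = ∑ v, f v}.Nonempty := by
    refine ⟨∑ v : V, (1 : ℕ), fun _ => 1, ⟨fun v => one_le_two, fun v h => absurd h one_ne_zero⟩, rfl⟩
  have hmem : pid G ∈ {w | ∃ f, IsPIDFun G f ∧ w = ∑ v, f v} := Nat.sInf_mem hne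
  obtain ⟨f, ⟨hle, hzero⟩, hw⟩ := hmem
  set A : Finset V := Finset.univ.filter (fun v => f v = 0) with hA
  set B : Finset V := Finset.univ.filter (fun v => f v ≠ 0) with hB
  -- key: for each u, the zero vertices adjacent to u number at most degree u
  have key : ∀ u : V, (∑ v ∈ A, if G.Adj v u then f u else 0) ≤ f u * G.degree u := by
    intro u
    calc (∑ v ∈ A, if G.Adj v u then f u else 0)
        ≤ ∑ v : V, if G.Adj v u then f u else 0 :=
          Finset.sum_le_sum_of_subset (Finset.filter_subset _ _)
      _ = ∑ v ∈ Finset.univ.filter (fun v => G.Adj v u), f u := by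
          rw [Finset.sum_filter]
      _ = (Finset.univ.filter (fun v => G.Adj v u)).card * f u := by
          rw [Finset.sum_const, smul_eq_mul]
      _ = (G.neighborFinset u).card * f u := by
          congr 1
          congr 1
          ext v
          simp [SimpleGraph.adj_comm]
      _ = f u * G.degree u := by rw [SimpleGraph.degree, mul_comm]
  have hnat : 2 * Fintype.card V ≤ (G.maxDegree + 2) * ∑ v, f v := by
    have hsplit : (Finset.univ : Finset V) = A ∪ B := by
      ext v; by_cases h : f v = 0 <;> simp [hA, hB, h]
    have hdisj : Disjoint A B := by
      simp [hA, hB, Finset.disjoint_filter]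
    have h2n : 2 * Fintype.card V = (∑ v ∈ A, 2) + (∑ v ∈ B, 2) := by
      rw [← Finset.sum_union hdisj, ← hsplit, Finset.sum_const, Finset.card_univ,
        smul_eq_mul, mul_comm]
    have hAle : (∑ v ∈ A, 2) ≤ G.maxDegree * ∑ v, f v := by
      have h1 : (∑ v ∈ A, 2) = ∑ v ∈ A, ∑ u : V, (if G.Adj v u then f u else 0) := by
        apply Finset.sum_congr rfl
        intro v hv
        rw [hA] at hv
        exact (hzero v (Finset.mem_filter.mp hv).2).symm
      rw [h1, Finset.sum_comm]
      calc (∑ u : V, ∑ v ∈ A, if G.Adj v u then f u else 0)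
          ≤ ∑ u : V, f u * G.degree u := Finset.sum_le_sum (fun u _ => key u)
        _ ≤ ∑ u : V, f u * G.maxDegree :=
            Finset.sum_le_sum (fun u _ =>
              Nat.mul_le_mul_left _ (G.degree_le_maxDegree u))
        _ = G.maxDegree * ∑ u, f u := by rw [← Finset.sum_mul, mul_comm]
    have hBle : (∑ v ∈ B, 2) ≤ 2 * ∑ v, f v := by
      calc (∑ v ∈ B, 2) ≤ ∑ v ∈ B, 2 * f v := by
            apply Finset.sum_le_sum
            intro v hv
            rw [hB] at hv
            have := Nat.one_le_iff_ne_zero.mpr (Finset.mem_filter.mp hv).2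
            omega
        _ = 2 * ∑ v ∈ B, f v := by rw [Finset.mul_sum]
        _ ≤ 2 * ∑ v, f v :=
            Nat.mul_le_mul_left _ (Finset.sum_le_sum_of_subset (Finset.filter_subset _ _))
    calc 2 * Fintype.card V = (∑ v ∈ A, 2) + (∑ v ∈ B, 2) := h2n
      _ ≤ G.maxDegree * (∑ v, f v) + 2 * (∑ v, f v) := Nat.add_le_add hAle hBle
      _ = (G.maxDegree + 2) * ∑ v, f v := by ring
  have hpos : (0 : ℝ) < (G.maxDegree : ℝ) + 2 := by positivity
  rw [div_le_iff₀ hpos]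
  have : (2 * Fintype.card V : ℝ) ≤ ((G.maxDegree + 2) * ∑ v, f v : ℕ) := by
    exact_mod_cast Nat.cast_le.mpr hnat
  push_cast at this ⊢
  rw [hw]
  push_cast
  linarith
end

section
/- For every integer ℓ ≥ 6, let S_ℓ be the split graph of order n = ℓ + 2 obtained from the complete graph K_ℓ by choosing four distinct vertices a, b, c, d and adding two new vertices x and y together with the edges xa, xb, xc, and yd. Then pid(S_ℓ) = ℓ + 2 = n; consequently there are connected split graphs of arbitrarily large order n with pid equal to n. -/
open scoped Classical

/-- The split graph `S_ℓ`: start from a clique `K_ℓ` (the vertices `Sum.inl i`),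
pick four distinct vertices `a, b, c, d` of it (indices `0, 1, 2, 3`), and add two
new vertices `x = Sum.inr 0` and `y = Sum.inr 1` together with the edges
`xa, xb, xc` and `yd`. -/
def splitGraphS (ℓ : ℕ) : SimpleGraph (Fin ℓ ⊕ Fin 2) :=
  SimpleGraph.fromRel fun u v =>
    match u, v with
    | Sum.inl _, Sum.inl _ => True
    | Sum.inr x, Sum.inl i => (x = 0 ∧ i.val ≤ 2) ∨ (x = 1 ∧ i.val = 3)
    | _, _ => False

namespace PIDAux
open Sum Finset

variable {ℓ : ℕ}

lemma adj_ll (i j : Fin ℓ) : (splitGraphS ℓ).Adj (inl i) (inl j) ↔ i ≠ j := by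
  simp [splitGraphS]

lemma adj_xl (j : Fin ℓ) : (splitGraphS ℓ).Adj (inr 0) (inl j) ↔ j.val ≤ 2 := by
  simp [splitGraphS]

lemma adj_yl (j : Fin ℓ) : (splitGraphS ℓ).Adj (inr 1) (inl j) ↔ j.val = 3 := by
  simp [splitGraphS]

lemma adj_rr (a b : Fin 2) : ¬ (splitGraphS ℓ).Adj (inr a) (inr b) := by
  simp [splitGraphS]

lemma adj_lx (i : Fin ℓ) : (splitGraphS ℓ).Adj (inl i) (inr 0) ↔ i.val ≤ 2 := by
  simp [splitGraphS]

lemma adj_ly (i : Fin ℓ) : (splitGraphS ℓ).Adj (inl i) (inr 1) ↔ i.val = 3 := by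
  simp [splitGraphS]

lemma nsum_inl (f : Fin ℓ ⊕ Fin 2 → ℕ) (i : Fin ℓ) (h0 : f (inl i) = 0) :
    (∑ u, if (splitGraphS ℓ).Adj (inl i) u then f u else 0)
      = (∑ j, f (inl j)) +
        ((if i.val ≤ 2 then f (inr 0) else 0) + (if i.val = 3 then f (inr 1) else 0)) := by
  rw [Fintype.sum_sum_type]
  congr 1
  · apply Finset.sum_congr rfl
    intro j _
    by_cases h : i = j
    · subst h; simp [adj_ll, h0]
    · simp [adj_ll, h]
  · rw [Fin.sum_univ_two]
    congr 1
    · by_cases h : i.val ≤ 2 <;> simp [adj_lx, h]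
    · by_cases h : i.val = 3 <;> simp [adj_ly, h]

lemma nsum_x (hl : 6 ≤ ℓ) (f : Fin ℓ ⊕ Fin 2 → ℕ) :
    (∑ u, if (splitGraphS ℓ).Adj (inr 0) u then f u else 0)
      = f (inl ⟨0, by omega⟩) + f (inl ⟨1, by omega⟩) + f (inl ⟨2, by omega⟩) := by
  rw [Fintype.sum_sum_type]
  have h2 : ∑ b : Fin 2, (if (splitGraphS ℓ).Adj (inr 0) (inr b) then f (inr b) else 0) = 0 := by
    simp [adj_rr]
  rw [h2, add_zero]
  have : ∀ j : Fin ℓ, (if (splitGraphS ℓ).Adj (inr 0) (inl j) then f (inl j) else 0)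
      = if j.val ≤ 2 then f (inl j) else 0 := by
    intro j; by_cases h : j.val ≤ 2 <;> simp [adj_xl, h]
  rw [Finset.sum_congr rfl fun j _ => this j, Finset.sum_ite, Finset.sum_const, smul_zero, add_zero]
  have hfil : Finset.univ.filter (fun j : Fin ℓ => j.val ≤ 2)
      = ({⟨0, by omega⟩, ⟨1, by omega⟩, ⟨2, by omega⟩} : Finset (Fin ℓ)) := by
    ext j; simp [Fin.ext_iff]; omega
  rw [hfil]
  rw [Finset.sum_insert (by simp [Fin.ext_iff]), Finset.sum_insert (by simp [Fin.ext_iff]),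
    Finset.sum_singleton]
  ring

lemma nsum_y (hl : 6 ≤ ℓ) (f : Fin ℓ ⊕ Fin 2 → ℕ) :
    (∑ u, if (splitGraphS ℓ).Adj (inr 1) u then f u else 0) = f (inl ⟨3, by omega⟩) := by
  rw [Fintype.sum_sum_type]
  have h2 : ∑ b : Fin 2, (if (splitGraphS ℓ).Adj (inr 1) (inr b) then f (inr b) else 0) = 0 := by
    simp [adj_rr]
  rw [h2, add_zero]
  have : ∀ j : Fin ℓ, (if (splitGraphS ℓ).Adj (inr 1) (inl j) then f (inl j) else 0)
      = if j = ⟨3, by omega⟩ then f (inl j) else 0 := by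
    intro j
    by_cases h : j.val = 3
    · simp [adj_yl, h, Fin.ext_iff]
    · simp [adj_yl, h, Fin.ext_iff]
  rw [Finset.sum_congr rfl fun j _ => this j, Finset.sum_ite_eq' Finset.univ]
  simp

set_option maxHeartbeats 1000000 in
lemma lower_bound {ℓ : ℕ} (hl : 6 ≤ ℓ) (f : Fin ℓ ⊕ Fin 2 → ℕ)
    (hf : IsPIDFun (splitGraphS ℓ) f) : ℓ + 2 ≤ ∑ v, f v := by
  obtain ⟨hle, hz⟩ := hf
  set S : ℕ := ∑ j, f (inl j) with hS
  have htot : ∑ v, f v = S + (f (inr 0) + f (inr 1)) := by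
    rw [Fintype.sum_sum_type, Fin.sum_univ_two]
  have keyA : ∀ i : Fin ℓ, f (inl i) = 0 →
      S + ((if i.val ≤ 2 then f (inr 0) else 0) + (if i.val = 3 then f (inr 1) else 0)) = 2 := by
    intro i hi
    rw [← nsum_inl f i hi]
    exact hz (inl i) hi
  have hsub3 : f (inl ⟨0, by omega⟩) + f (inl ⟨1, by omega⟩) + f (inl ⟨2, by omega⟩) ≤ S := by
    have h := Finset.sum_le_sum_of_subset (Finset.subset_univ
      ({⟨0, by omega⟩, ⟨1, by omega⟩, ⟨2, by omega⟩} : Finset (Fin ℓ)))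
      (f := fun j => f (inl j))
    rwa [Finset.sum_insert (by simp [Fin.ext_iff]),
      Finset.sum_insert (by simp [Fin.ext_iff]), Finset.sum_singleton, ← add_assoc] at h
  have hsub4 : f (inl ⟨0, by omega⟩) + f (inl ⟨1, by omega⟩) + f (inl ⟨2, by omega⟩)
      + f (inl ⟨3, by omega⟩) ≤ S := by
    have h := Finset.sum_le_sum_of_subset (Finset.subset_univ
      ({⟨0, by omega⟩, ⟨1, by omega⟩, ⟨2, by omega⟩, ⟨3, by omega⟩} : Finset (Fin ℓ)))
      (f := fun j => f (inl j))
    rwa [Finset.sum_insert (by simp [Fin.ext_iff]), Finset.sum_insert (by simp [Fin.ext_iff]),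
      Finset.sum_insert (by simp [Fin.ext_iff]), Finset.sum_singleton,
      ← add_assoc, ← add_assoc] at h
  have hsub1 : f (inl ⟨3, by omega⟩) ≤ S :=
    Finset.single_le_sum (f := fun j => f (inl j)) (fun j _ => Nat.zero_le _) (Finset.mem_univ _)
  have hall : ∀ i : Fin ℓ, 1 ≤ f (inl i) := by
    by_contra h
    push_neg at h
    obtain ⟨i, hi⟩ := h
    have hi : f (inl i) = 0 := by omega
    have hS2 : S ≤ 2 := by have := keyA i hi; omega
    have h012 : f (inl ⟨0, by omega⟩) = 0 ∨ f (inl ⟨1, by omega⟩) = 0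
        ∨ f (inl ⟨2, by omega⟩) = 0 := by
      by_contra h'; push_neg at h'; omega
    have hxeq : S + f (inr 0) = 2 := by
      rcases h012 with h' | h' | h' <;>
      · have := keyA _ h'
        norm_num at this
        omega
    by_cases hS2' : S = 2
    · have hx0 : f (inr 0) = 0 := by omega
      have hx := hz (inr 0) hx0
      rw [nsum_x hl f] at hx
      have h3 : f (inl ⟨3, by omega⟩) = 0 := by omega
      have hk3 := keyA _ h3
      norm_num at hk3
      have hy0 : f (inr 1) = 0 := by omega
      have hy := hz (inr 1) hy0
      rw [nsum_y hl f] at hy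
      omega
    · have hS1 : S ≤ 1 := by omega
      have hsub45 : f (inl ⟨4, by omega⟩) + f (inl ⟨5, by omega⟩) ≤ S := by
        have h := Finset.sum_le_sum_of_subset (Finset.subset_univ
          ({⟨4, by omega⟩, ⟨5, by omega⟩} : Finset (Fin ℓ))) (f := fun j => f (inl j))
        rwa [Finset.sum_insert (by simp [Fin.ext_iff]), Finset.sum_singleton] at h
      have h45 : f (inl ⟨4, by omega⟩) = 0 ∨ f (inl ⟨5, by omega⟩) = 0 := by omega
      rcases h45 with h' | h' <;>
      · have := keyA _ h'
        norm_num at this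
        omega
  have hSl : ℓ ≤ S := by
    calc ℓ = ∑ _j : Fin ℓ, 1 := by simp
    _ ≤ S := Finset.sum_le_sum fun j _ => hall j
  have hx1 : 1 ≤ f (inr 0) := by
    by_contra h
    have hx0 : f (inr 0) = 0 := by omega
    have hx := hz (inr 0) hx0
    rw [nsum_x hl f] at hx
    have h0 := hall ⟨0, by omega⟩
    have h1 := hall ⟨1, by omega⟩
    have h2 := hall ⟨2, by omega⟩
    omega
  by_cases hy0 : f (inr 1) = 0
  · have hy := hz (inr 1) hy0
    rw [nsum_y hl f] at hy
    have hSl1 : ℓ + 1 ≤ S := by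
      have hpt : ∀ j ∈ Finset.univ, (if j = (⟨3, by omega⟩ : Fin ℓ) then 2 else 1) ≤ f (inl j) := by
        intro j _
        by_cases h : j = (⟨3, by omega⟩ : Fin ℓ)
        · subst h; simp [hy]
        · simp [h, hall j]
      have hle' := Finset.sum_le_sum hpt
      have hsum : (∑ j : Fin ℓ, if j = (⟨3, by omega⟩ : Fin ℓ) then 2 else 1) = ℓ + 1 := by
        have : ∀ j : Fin ℓ, (if j = (⟨3, by omega⟩ : Fin ℓ) then 2 else 1)
            = (if j = (⟨3, by omega⟩ : Fin ℓ) then 1 else 0) + 1 := by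
          intro j; by_cases h : j = (⟨3, by omega⟩ : Fin ℓ) <;> simp [h]
        rw [Finset.sum_congr rfl fun j _ => this j, Finset.sum_add_distrib,
          Finset.sum_ite_eq' Finset.univ]
        simp
        omega
      omega
    omega
  · have : 1 ≤ f (inr 1) := by omega
    omega

lemma reach_to_zero {ℓ : ℕ} (hl : 6 ≤ ℓ) (v : Fin ℓ ⊕ Fin 2) :
    (splitGraphS ℓ).Reachable v (inl ⟨0, by omega⟩) := by
  have h30 : (splitGraphS ℓ).Adj (inl ⟨3, by omega⟩) (inl ⟨0, by omega⟩) := by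
    rw [adj_ll]; simp [Fin.ext_iff]
  rcases v with i | b
  · by_cases h : i = (⟨0, by omega⟩ : Fin ℓ)
    · exact h ▸ SimpleGraph.Reachable.refl _
    · exact ((adj_ll i _).2 h).reachable
  · fin_cases b
    · exact (((adj_xl (⟨0, by omega⟩ : Fin ℓ)).2 (by simp)).reachable)
    · exact (((adj_yl (⟨3, by omega⟩ : Fin ℓ)).2 (by simp)).reachable).trans h30.reachable

end PIDAux


open Sum PIDAux

/-- For every `ℓ ≥ 6`, the split graph `S_ℓ` is a connected split graph of order
`n = ℓ + 2` with `pid (S_ℓ) = ℓ + 2 = n`; hence there are connected split graphs of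
arbitrarily large order `n` with perfect Italian domination number `n`. -/
theorem pid_splitGraphS (ℓ : ℕ) (hℓ : 6 ≤ ℓ) :
    (splitGraphS ℓ).Connected ∧
    (∃ K : Set (Fin ℓ ⊕ Fin 2), (splitGraphS ℓ).IsClique K ∧ (splitGraphS ℓ)ᶜ.IsClique Kᶜ) ∧
    Fintype.card (Fin ℓ ⊕ Fin 2) = ℓ + 2 ∧
    pid (splitGraphS ℓ) = ℓ + 2 := by
  refine ⟨?_, ?_, ?_, ?_⟩
  · have : Nonempty (Fin ℓ ⊕ Fin 2) := ⟨inl ⟨0, by omega⟩⟩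
    exact ⟨fun u v => (reach_to_zero hℓ u).trans (reach_to_zero hℓ v).symm⟩
  · refine ⟨{v | v.isLeft}, ?_, ?_⟩
    · intro u hu v hv huv
      rcases u with i | b
      · rcases v with j | b
        · exact (adj_ll i j).2 (fun h => huv (by rw [h]))
        · simp at hv
      · simp at hu
    · intro u hu v hv huv
      rcases u with i | a
      · simp at hu
      · rcases v with j | b
        · simp at hv
        · exact ⟨huv, adj_rr a b⟩
  · simp
  · have hmem : ℓ + 2 ∈ {w | ∃ f, IsPIDFun (splitGraphS ℓ) f ∧ w = ∑ v, f v} := by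
      refine ⟨fun _ => 1, ⟨fun v => one_le_two, fun v h => absurd h one_ne_zero⟩, ?_⟩
      simp
    refine le_antisymm (Nat.sInf_le hmem) (le_csInf ⟨_, hmem⟩ ?_)
    rintro w ⟨f, hf, rfl⟩
    exact lower_bound hℓ f hf
end
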